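/- With μ_i and λ_j defined as in the previous context, the Poisson bracket {μ_i, λ_j} equals (Δ^{1,i+1,…,n}_{i,i+1,…,n}(C_1)/Δ^{i+1,…,n}_{i+1,…,n}(C_t)) · ∑_{k=1}^{i} (Δ^{i,i+1,…,n}_{k,i+1,…,n}(C_t)/Δ^{i,…,n}_{i,…,n}(C_t)) · ∑_{l=j}^{n} (−1)^{l−j} (Δ^{j+1,…,n}_{j,…,l̂,…,n}(C_t)/Δ^{1,j+1,…,n}_{j,j+1,…,n}(C_1)) δ_{k,l}, and this expression equals δ_{i,j}; in particular {μ_i, λ_j} = δ_{i,j} for all 1 ≤ i, j ≤ n (assuming all minors in denominators are nonzero). -/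

import Mathlib

open Matrix Finset

/-- The minor determinant `Δ^{rows}_{cols}(C)`. -/
def minorDet {R : Type*} [CommRing R] {n r : ℕ} (C : Matrix (Fin n) (Fin n) R)
    (rows cols : Fin r → Fin n) : R :=
  (C.submatrix rows cols).det

/-- The index list `(i, i+1, …, n-1)` (0-based). -/
def idxFrom {n : ℕ} (i : ℕ) : Fin (n - i) → Fin n :=
  fun l => ⟨i + l.1, by have := l.2; omega⟩

/-- The index list `(k, i+1, …, n-1)` (0-based). -/
def idxRepl {n : ℕ} (i : ℕ) (k : Fin n) : Fin (n - i) → Fin n :=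
  fun l => if l.1 = 0 then k else ⟨i + l.1, by have := l.2; omega⟩

/-- `Δ^{1,i+1,…,n}_{i,i+1,…,n}(C)` (0-based: rows `(0, i+1, …, n-1)`, columns
`(i, …, n-1)`). -/
def minA {R : Type*} [CommRing R] {n : ℕ} (C : Matrix (Fin n) (Fin n) R)
    (i : Fin n) : R :=
  minorDet C (idxRepl i.1 ⟨0, by have := i.isLt; omega⟩) (idxFrom i.1)

/-- `Δ^{i,i+1,…,n}_{k,i+1,…,n}(C)`. -/
def minB {R : Type*} [CommRing R] {n : ℕ} (C : Matrix (Fin n) (Fin n) R)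
    (i k : Fin n) : R :=
  minorDet C (idxFrom i.1) (idxRepl i.1 k)

/-- `Δ^{i+1,…,n}_{i+1,…,n}(C)`. -/
def minC {R : Type*} [CommRing R] {n : ℕ} (C : Matrix (Fin n) (Fin n) R)
    (i : Fin n) : R :=
  minorDet C (idxFrom (i.1 + 1)) (idxFrom (i.1 + 1))

/-- `Δ^{i,…,n}_{i,…,n}(C)`. -/
def minD {R : Type*} [CommRing R] {n : ℕ} (C : Matrix (Fin n) (Fin n) R)
    (i : Fin n) : R :=
  minorDet C (idxFrom i.1) (idxFrom i.1)

/-- `μ_i = (-1)^{n-1-i} t⁻¹ (Δ^{0,i+1,…}_{i,…}(C₁)/Δ^{i+1,…}_{i+1,…}(C_t))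
  ∑_{k≤i} (Δ^{i,…}_{k,i+1,…}(C_t)/Δ^{i,…}_{i,…}(C_t)) b_k`  (0-based). -/
def muVar {A : Type*} [Field A] {n : ℕ} (t : A) (b : Fin n → A)
    (Ct C1 : Matrix (Fin n) (Fin n) A) (i : Fin n) : A :=
  (-1 : A) ^ (n - 1 - i.1) * t⁻¹ * (minA C1 i / minC Ct i) *
    ∑ k : Fin n, if k.1 ≤ i.1 then (minB Ct i k / minD Ct i) * b k else 0

/-- `λ_i = (-1)^{n-i} t · Δ^{0,i+1,…}_{i,…}(C_t)/Δ^{0,i+1,…}_{i,…}(C₁)` (0-based). -/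
def lamVar {A : Type*} [Field A] {n : ℕ} (t : A)
    (Ct C1 : Matrix (Fin n) (Fin n) A) (i : Fin n) : A :=
  (-1 : A) ^ (n - i.1) * t * (minA Ct i / minA C1 i)

/-- The index list `(j, …, n-1)` with `k` omitted (0-based). -/
def idxOmit {n : ℕ} (j k : ℕ) : Fin (n - (j + 1)) → Fin n :=
  fun l => if j + l.1 < k then ⟨j + l.1, by have := l.2; omega⟩
    else ⟨j + l.1 + 1, by have := l.2; omega⟩

/-- `Δ^{j+1,…,n}_{j,…,l̂,…,n}(C)`. -/
def minOmit {R : Type*} [CommRing R] {n : ℕ} (C : Matrix (Fin n) (Fin n) R)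
    (j l : Fin n) : R :=
  minorDet C (idxFrom (j.1 + 1)) (idxOmit j.1 l.1)


namespace Stmt14

variable {A : Type*} [Field A] {n : ℕ}

/-- The `(n-j)×(n-j)` matrix with first row given by `w` (restricted to columns
`j,…,n-1`) and remaining rows the rows `j+1,…,n-1` of `Ct`. -/
def Qm (Ct : Matrix (Fin n) (Fin n) A) (j : Fin n) (w : Fin n → A) :
    Matrix (Fin (n - (j.1 + 1) + 1)) (Fin (n - (j.1 + 1) + 1)) A :=
  Matrix.of fun r c =>
    if r.1 = 0 then w ⟨j.1 + c.1, by have := c.2; have := j.2; omega⟩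
    else Ct ⟨j.1 + r.1, by have := r.2; have := j.2; omega⟩
      ⟨j.1 + c.1, by have := c.2; have := j.2; omega⟩

lemma Qm_apply_zero (Ct : Matrix (Fin n) (Fin n) A) (j : Fin n) (w : Fin n → A)
    (c : Fin (n - (j.1 + 1) + 1)) :
    Qm Ct j w 0 c = w ⟨j.1 + c.1, by have := c.2; have := j.2; omega⟩ := rfl

lemma Qm_apply_ne (Ct : Matrix (Fin n) (Fin n) A) (j : Fin n) (w : Fin n → A)
    {r : Fin (n - (j.1 + 1) + 1)} (c : Fin (n - (j.1 + 1) + 1)) (h : r.1 ≠ 0) :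
    Qm Ct j w r c = Ct ⟨j.1 + r.1, by have := r.2; have := j.2; omega⟩
      ⟨j.1 + c.1, by have := c.2; have := j.2; omega⟩ := by
  simp only [Qm, Matrix.of_apply]
  rw [if_neg h]

lemma appc {C : Matrix (Fin n) (Fin n) A} {a b a' b' : Fin n}
    (h1 : a = a') (h2 : b = b') : C a b = C a' b' := by rw [h1, h2]

lemma Qm_submatrix (Ct : Matrix (Fin n) (Fin n) A) (j : Fin n) (w : Fin n → A)
    (c : Fin (n - (j.1 + 1) + 1)) :
    (Qm Ct j w).submatrix Fin.succ c.succAbove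
      = Ct.submatrix (idxFrom (j.1 + 1)) (idxOmit j.1 (j.1 + c.1)) := by
  ext r' c'
  simp only [Matrix.submatrix_apply, Qm, Matrix.of_apply, idxFrom, idxOmit,
    Fin.val_succ]
  rw [if_neg (by omega)]
  rcases lt_or_ge (c'.1) (c.1) with h | h
  · rw [Fin.succAbove_of_castSucc_lt _ _ (by simpa [Fin.lt_def] using h),
      if_pos (by omega)]
    exact appc (by simp only [Fin.mk.injEq]; omega)
      (by simp only [Fin.coe_castSucc, Fin.mk.injEq])
  · rw [Fin.succAbove_of_le_castSucc _ _ (by simpa [Fin.le_def] using h),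
      if_neg (by omega)]
    exact appc (by simp only [Fin.mk.injEq]; omega)
      (by simp only [Fin.val_succ, Fin.mk.injEq]; omega)

lemma det_Qm (Ct : Matrix (Fin n) (Fin n) A) (j : Fin n) (w : Fin n → A) :
    (Qm Ct j w).det
      = ∑ k : Fin n, if j.1 ≤ k.1 then
          (-1 : A) ^ (k.1 - j.1) * w k * minOmit Ct j k else 0 := by
  rw [Matrix.det_succ_row_zero]
  rw [← Finset.sum_filter]
  refine Finset.sum_nbij' (fun c => ⟨j.1 + c.1, by have := c.2; have := j.2; omega⟩)
    (fun k => ⟨k.1 - j.1, by have := k.2; have := j.2; omega⟩) ?_ ?_ ?_ ?_ ?_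
  · intro c _
    simp only [Finset.mem_filter, Finset.mem_univ, true_and, Fin.val_mk]
    omega
  · intro k _; simp
  · intro c _; exact Fin.ext (by simp only [Fin.val_mk]; omega)
  · intro k hk; simp only [Finset.mem_filter, Finset.mem_univ, true_and] at hk
    exact Fin.ext (by simp only [Fin.val_mk]; omega)
  · intro c _
    rw [Qm_submatrix]
    simp only [Qm, Matrix.of_apply, minOmit, minorDet, Nat.add_sub_cancel_left]
    norm_num

lemma minA_eq_det_Qm (Ct : Matrix (Fin n) (Fin n) A) (j : Fin n) :
    minA Ct j = (Qm Ct j (Ct ⟨0, by have := j.2; omega⟩)).det := by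
  have h : n - (j.1 + 1) + 1 = n - j.1 := by have := j.2; omega
  rw [minA, minorDet, ← Matrix.det_submatrix_equiv_self (finCongr h)]
  congr 1
  ext r c
  simp only [Matrix.submatrix_apply, Qm, Matrix.of_apply, idxRepl, idxFrom,
    finCongr_apply, Fin.coe_cast]
  split_ifs <;> rfl

def Em (Ct : Matrix (Fin n) (Fin n) A) (i : Fin n) (r : Fin (n - (i.1 + 1) + 1)) : A :=
  (Matrix.of fun r' c' : Fin (n - (i.1 + 1)) =>
    Ct ⟨i.1 + (r.succAbove r').1, by have := (r.succAbove r').2; have := i.2; omega⟩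
       ⟨i.1 + 1 + c'.1, by have := c'.2; omega⟩).det

lemma minB_expand (Ct : Matrix (Fin n) (Fin n) A) (i k : Fin n) :
    minB Ct i k = ∑ r : Fin (n - (i.1 + 1) + 1),
      (-1 : A) ^ r.1 * Ct ⟨i.1 + r.1, by have := r.2; have := i.2; omega⟩ k * Em Ct i r := by
  have h : n - (i.1 + 1) + 1 = n - i.1 := by have := i.2; omega
  rw [minB, minorDet, ← Matrix.det_submatrix_equiv_self (finCongr h)]
  rw [Matrix.det_succ_column_zero]
  refine Finset.sum_congr rfl fun r _ => ?_
  have h1 : ((Ct.submatrix (idxFrom i.1) (idxRepl i.1 k)).submatrix (finCongr h) (finCongr h)) r 0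
      = Ct ⟨i.1 + r.1, by have := r.2; have := i.2; omega⟩ k := by
    simp only [Matrix.submatrix_apply, idxFrom, idxRepl, finCongr_apply, Fin.coe_cast,
      Fin.val_zero]
    rw [if_pos trivial]
  have h2 : (((Ct.submatrix (idxFrom i.1) (idxRepl i.1 k)).submatrix (finCongr h)
        (finCongr h)).submatrix r.succAbove Fin.succ).det = Em Ct i r := by
    rw [Em]
    congr 1
    ext r' c'
    simp only [Matrix.submatrix_apply, Matrix.of_apply, idxFrom, idxRepl, finCongr_apply,
      Fin.coe_cast, Fin.val_succ]
    rw [if_neg (by omega)]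
    exact appc rfl (by simp only [Fin.mk.injEq]; omega)
  rw [h1, h2]

lemma minB_eq_zero (Ct : Matrix (Fin n) (Fin n) A) (i k : Fin n) (hik : i.1 < k.1) :
    minB Ct i k = 0 := by
  rw [minB, minorDet]
  refine Matrix.det_zero_of_column_eq
    (i := (⟨0, by have := i.2; omega⟩ : Fin (n - i.1)))
    (j := ⟨k.1 - i.1, by have := k.2; omega⟩)
    (by simp only [ne_eq, Fin.mk.injEq]; omega) (fun r => ?_)
  simp only [Matrix.submatrix_apply, idxRepl, Fin.val_mk]
  rw [if_pos trivial, if_neg (by omega)]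
  exact appc rfl (Fin.ext (by simp only [Fin.val_mk]; omega))

lemma det_updateRow_sum' {q : ℕ} (M : Matrix (Fin q) (Fin q) A) (r0 : Fin q)
    {ι : Type*} (s : Finset ι) (f : ι → Fin q → A) :
    (M.updateRow r0 (∑ x ∈ s, f x)).det = ∑ x ∈ s, (M.updateRow r0 (f x)).det := by
  classical
  induction s using Finset.induction_on with
  | empty =>
      rw [Finset.sum_empty, Finset.sum_empty]
      exact Matrix.det_eq_zero_of_row_eq_zero r0 (fun c => by simp)
  | insert _ _ hx ih =>
      rw [Finset.sum_insert hx, Finset.sum_insert hx, Matrix.det_updateRow_add, ih]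

lemma det_Qm_minB (Ct : Matrix (Fin n) (Fin n) A) (i j : Fin n) (hji : j.1 < i.1) :
    (Qm Ct j (fun k => minB Ct i k)).det = 0 := by
  set u : Fin (n - (i.1 + 1) + 1) → Fin (n - (j.1 + 1) + 1) → A := fun r c =>
    (-1 : A) ^ r.1 * Ct ⟨i.1 + r.1, by have := r.2; have := i.2; omega⟩
      ⟨j.1 + c.1, by have := c.2; have := j.2; omega⟩ * Em Ct i r with hu
  have hrow : Qm Ct j (fun k => minB Ct i k)
      = (Qm Ct j (fun _ => (0 : A))).updateRow 0 (∑ r, u r) := by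
    ext r c
    rcases eq_or_ne r 0 with hr | hr
    · subst hr
      rw [Matrix.updateRow_self]
      rw [Qm_apply_zero, Finset.sum_apply,
        minB_expand Ct i ⟨j.1 + c.1, by have := c.2; have := j.2; omega⟩]
    · rw [Matrix.updateRow_ne hr]
      have h0 : r.1 ≠ 0 := by intro h; exact hr (Fin.ext (by rw [h, Fin.val_zero]))
      rw [Qm_apply_ne Ct j _ c h0, Qm_apply_ne Ct j _ c h0]
  rw [hrow, det_updateRow_sum']
  refine Finset.sum_eq_zero fun r _ => ?_
  have hsm : u r = ((-1 : A) ^ r.1 * Em Ct i r) •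
      (fun c : Fin (n - (j.1 + 1) + 1) =>
        Ct ⟨i.1 + r.1, by have := r.2; have := i.2; omega⟩
          ⟨j.1 + c.1, by have := c.2; have := j.2; omega⟩) := by
    funext c
    simp only [hu, Pi.smul_apply, smul_eq_mul]
    ring
  rw [hsm, Matrix.det_updateRow_smul]
  have hz : ((Qm Ct j (fun _ => (0 : A))).updateRow 0
      (fun c : Fin (n - (j.1 + 1) + 1) =>
        Ct ⟨i.1 + r.1, by have := r.2; have := i.2; omega⟩
          ⟨j.1 + c.1, by have := c.2; have := j.2; omega⟩)).det = 0 := by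
    refine Matrix.det_zero_of_row_eq
      (i := (0 : Fin (n - (j.1 + 1) + 1)))
      (j := ⟨i.1 + r.1 - j.1, by have := r.2; have := i.2; have := j.2; omega⟩)
      (by simp only [ne_eq, Fin.ext_iff, Fin.val_mk, Fin.val_zero]; omega) ?_
    funext c
    rw [Matrix.updateRow_self,
      Matrix.updateRow_ne (by simp only [ne_eq, Fin.ext_iff, Fin.val_mk, Fin.val_zero]; omega)]
    rw [Qm_apply_ne Ct j _ c (by simp only [Fin.val_mk]; omega)]
    exact appc (Fin.ext (by simp only [Fin.val_mk]; omega)) rfl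
  rw [hz, mul_zero]

lemma minB_self (Ct : Matrix (Fin n) (Fin n) A) (i : Fin n) : minB Ct i i = minD Ct i := by
  rw [minB, minD, minorDet, minorDet]
  congr 1
  ext r c
  simp only [Matrix.submatrix_apply, idxRepl, idxFrom]
  split_ifs with h
  · exact appc rfl (Fin.ext (by simp only [Fin.val_mk]; omega))
  · rfl

lemma minOmit_self (Ct : Matrix (Fin n) (Fin n) A) (i : Fin n) :
    minOmit Ct i i = minC Ct i := by
  rw [minOmit, minC, minorDet, minorDet]
  congr 1
  ext r c
  simp only [Matrix.submatrix_apply, idxOmit, idxFrom]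
  rw [if_neg (by omega)]
  exact appc rfl (Fin.ext (by simp only [Fin.val_mk]; omega))

def Tsum (Ct : Matrix (Fin n) (Fin n) A) (i j : Fin n) : A :=
  ∑ k : Fin n, if j.1 ≤ k.1 ∧ k.1 ≤ i.1 then
    (-1 : A) ^ (k.1 - j.1) * minB Ct i k * minOmit Ct j k else 0

lemma Tsum_eq (Ct : Matrix (Fin n) (Fin n) A) (i j : Fin n) :
    Tsum Ct i j = if i = j then minD Ct i * minC Ct i else 0 := by
  rcases lt_trichotomy j.1 i.1 with hji | heq | hij
  · rw [if_neg (by intro h; subst h; omega), Tsum]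
    have hc : ∀ k : Fin n, (if j.1 ≤ k.1 ∧ k.1 ≤ i.1 then
        (-1 : A) ^ (k.1 - j.1) * minB Ct i k * minOmit Ct j k else 0)
        = if j.1 ≤ k.1 then (-1 : A) ^ (k.1 - j.1) * minB Ct i k * minOmit Ct j k else 0 := by
      intro k
      rcases le_or_gt k.1 i.1 with h1 | h1
      · by_cases h2 : j.1 ≤ k.1
        · rw [if_pos ⟨h2, h1⟩, if_pos h2]
        · rw [if_neg (by tauto), if_neg h2]
      · rw [if_neg (by omega), minB_eq_zero Ct i k h1]
        split_ifs <;> ring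
    rw [Finset.sum_congr rfl (fun k _ => hc k), ← det_Qm, det_Qm_minB Ct i j hji]
  · have he : i = j := Fin.ext heq.symm
    subst he
    rw [if_pos rfl, Tsum]
    rw [Finset.sum_eq_single i]
    · rw [if_pos ⟨le_refl _, le_refl _⟩, Nat.sub_self, pow_zero, one_mul,
        minB_self, minOmit_self]
    · intro k _ hk
      exact if_neg (by rintro ⟨h1, h2⟩; exact hk (Fin.ext (by omega)))
    · intro h; exact absurd (Finset.mem_univ i) h
  · rw [if_neg (by intro h; subst h; omega), Tsum]
    exact Finset.sum_eq_zero fun k _ => if_neg (by omega)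

section PoissonCalc

variable {P : A → A → A}

lemma Pzero (haddl : ∀ x y z : A, P (x + y) z = P x z + P y z) (z : A) : P 0 z = 0 := by
  have h := haddl 0 0 z
  rw [add_zero] at h
  exact add_eq_left.mp h.symm

lemma Psum (haddl : ∀ x y z : A, P (x + y) z = P x z + P y z) {ι : Type*}
    (s : Finset ι) (f : ι → A) (z : A) :
    P (∑ x ∈ s, f x) z = ∑ x ∈ s, P (f x) z :=
  map_sum (AddMonoidHom.mk' (fun y => P y z) (fun a b => haddl a b z)) f s

lemma Pneg (haddl : ∀ x y z : A, P (x + y) z = P x z + P y z) (y z : A) :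
    P (-y) z = -P y z :=
  map_neg (AddMonoidHom.mk' (fun y => P y z) (fun a b => haddl a b z)) y

lemma Pone (hleib : ∀ x y z : A, P (x * y) z = x * P y z + y * P x z) (z : A) :
    P 1 z = 0 := by
  have h := hleib 1 1 z
  rw [mul_one, one_mul] at h
  exact add_eq_left.mp h.symm

lemma Pmul0 (hleib : ∀ x y z : A, P (x * y) z = x * P y z + y * P x z) {x y z : A}
    (hx : P x z = 0) (hy : P y z = 0) : P (x * y) z = 0 := by
  rw [hleib, hx, hy, mul_zero, mul_zero, add_zero]

lemma Pprod0 (hleib : ∀ x y z : A, P (x * y) z = x * P y z + y * P x z) {ι : Type*}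
    (s : Finset ι) (f : ι → A) (z : A) (h : ∀ x ∈ s, P (f x) z = 0) :
    P (∏ x ∈ s, f x) z = 0 :=
  Finset.prod_induction f (fun y => P y z = 0) (fun _ _ ha hb => Pmul0 hleib ha hb)
    (Pone hleib z) h

lemma Pdet0 (haddl : ∀ x y z : A, P (x + y) z = P x z + P y z)
    (hleib : ∀ x y z : A, P (x * y) z = x * P y z + y * P x z)
    {q : ℕ} (M : Matrix (Fin q) (Fin q) A) (z : A) (h : ∀ a b, P (M a b) z = 0) :
    P M.det z = 0 := by
  rw [Matrix.det_apply, Psum haddl]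
  refine Finset.sum_eq_zero fun σ _ => ?_
  have h2 : P ((Equiv.Perm.sign σ : ℤ) • ∏ i, M (σ i) i) z
      = (Equiv.Perm.sign σ : ℤ) • P (∏ i, M (σ i) i) z :=
    map_zsmul (AddMonoidHom.mk' (fun y => P y z) (fun a b => haddl a b z)) _ _
  rw [Units.smul_def, h2, Pprod0 hleib _ _ _ (fun x _ => h _ _), smul_zero]

lemma PminorDet0 (haddl : ∀ x y z : A, P (x + y) z = P x z + P y z)
    (hleib : ∀ x y z : A, P (x * y) z = x * P y z + y * P x z)
    (C : Matrix (Fin n) (Fin n) A) {q : ℕ} (rows cols : Fin q → Fin n) (z : A)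
    (h : ∀ a b : Fin n, P (C a b) z = 0) :
    P (minorDet C rows cols) z = 0 := by
  rw [minorDet]
  exact Pdet0 haddl hleib _ z (fun a b => h _ _)

lemma Pinv0 (haddl : ∀ x y z : A, P (x + y) z = P x z + P y z)
    (hleib : ∀ x y z : A, P (x * y) z = x * P y z + y * P x z)
    {y z : A} (hy : P y z = 0) : P y⁻¹ z = 0 := by
  by_cases h : y = 0
  · rw [h, _root_.inv_zero]; exact Pzero haddl z
  · have h1 := hleib y y⁻¹ z
    rw [mul_inv_cancel₀ h, Pone hleib, hy, mul_zero, add_zero] at h1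
    exact (mul_eq_zero.mp h1.symm).resolve_left h

lemma Pdiv0 (haddl : ∀ x y z : A, P (x + y) z = P x z + P y z)
    (hleib : ∀ x y z : A, P (x * y) z = x * P y z + y * P x z)
    {x y z : A} (hx : P x z = 0) (hy : P y z = 0) : P (x / y) z = 0 := by
  rw [div_eq_mul_inv]
  exact Pmul0 hleib hx (Pinv0 haddl hleib hy)

lemma Pneg1pow (haddl : ∀ x y z : A, P (x + y) z = P x z + P y z)
    (hleib : ∀ x y z : A, P (x * y) z = x * P y z + y * P x z)
    (e : ℕ) (z : A) : P ((-1 : A) ^ e) z = 0 := by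
  rcases Nat.even_or_odd e with he | he
  · rw [he.neg_one_pow]; exact Pone hleib z
  · rw [he.neg_one_pow, Pneg haddl, Pone hleib, neg_zero]

end PoissonCalc

lemma minA_expand (Ct : Matrix (Fin n) (Fin n) A) (j : Fin n) :
    minA Ct j = ∑ k : Fin n, if j.1 ≤ k.1 then
      (-1 : A) ^ (k.1 - j.1) * Ct ⟨0, by have := j.2; omega⟩ k * minOmit Ct j k else 0 := by
  rw [minA_eq_det_Qm, det_Qm]

end Stmt14

open Stmt14 in
theorem stmt_14_aux (n : ℕ) (A : Type*) [Field A] (P : A → A → A)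
    (haddl : ∀ x y z : A, P (x + y) z = P x z + P y z)
    (hleib : ∀ x y z : A, P (x * y) z = x * P y z + y * P x z)
    (hskew : ∀ x y : A, P x y = -P y x)
    (t : A) (ht : ∀ x, P t x = 0) (ht0 : t ≠ 0)
    (b : Fin n → A) (Ct C1 : Matrix (Fin n) (Fin n) A)
    (hbct : ∀ k l m : Fin n, P (b k) (Ct l m) = if l.1 = 0 ∧ m = k then -1 else 0)
    (hbc1 : ∀ k l m : Fin n, P (b k) (C1 l m) = 0)
    (hbb : ∀ k k' : Fin n, P (b k) (b k') = 0)
    (hctct : ∀ l m l' m' : Fin n, P (Ct l m) (Ct l' m') = 0)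
    (hctc1 : ∀ l m l' m' : Fin n, P (Ct l m) (C1 l' m') = 0)
    (hc1c1 : ∀ l m l' m' : Fin n, P (C1 l m) (C1 l' m') = 0)
    (hden : ∀ i : Fin n, minA C1 i ≠ 0 ∧ minC Ct i ≠ 0 ∧ minD Ct i ≠ 0) :
    ∀ i j : Fin n,
      P (muVar t b Ct C1 i) (lamVar t Ct C1 j)
        = (minA C1 i / minC Ct i) *
            ∑ k : Fin n, (if k.1 ≤ i.1 then
              (minB Ct i k / minD Ct i) *
                ∑ l : Fin n, (if j.1 ≤ l.1 then
                  (-1 : A) ^ (l.1 - j.1) * (minOmit Ct j l / minA C1 j) *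
                    (if k = l then 1 else 0)
                else 0)
            else 0) ∧
      P (muVar t b Ct C1 i) (lamVar t Ct C1 j) = if i = j then 1 else 0 := by
  intro i j
  obtain ⟨hA1i, hCi, hDi⟩ := hden i
  obtain ⟨hA1j, hCj, hDj⟩ := hden j
  -- brackets of `b k` with the minors of `Ct`
  have hb_mo : ∀ k' k : Fin n, P (minOmit Ct j k') (b k) = 0 := by
    intro k' k
    rw [minOmit, minorDet]
    refine Pdet0 haddl hleib _ _ (fun a c => ?_)
    rw [Matrix.submatrix_apply, hskew, hbct, if_neg ?_, neg_zero]
    rintro ⟨h1, -⟩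
    simp only [idxFrom, Fin.val_mk] at h1
    omega
  have hminACt_b : ∀ k : Fin n, P (minA Ct j) (b k)
      = if j.1 ≤ k.1 then (-1 : A) ^ (k.1 - j.1) * minOmit Ct j k else 0 := by
    intro k
    rw [minA_expand Ct j, Psum haddl]
    refine Eq.trans (Finset.sum_congr rfl fun k' _ => ?_)
      (by rw [Finset.sum_ite_eq' Finset.univ k
          (fun _ => if j.1 ≤ k.1 then (-1 : A) ^ (k.1 - j.1) * minOmit Ct j k else 0),
        if_pos (Finset.mem_univ k)])
    by_cases hk : k' = k
    · rw [hk, if_pos rfl]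
      by_cases hj : j.1 ≤ k.1
      · rw [if_pos hj, if_pos hj, hleib, hb_mo, hleib, Pneg1pow haddl hleib]
        have hc : P (Ct ⟨0, by have := j.2; omega⟩ k) (b k) = 1 := by
          rw [hskew, hbct, if_pos ⟨rfl, rfl⟩]
          norm_num
        rw [hc]
        ring
      · rw [if_neg hj, if_neg hj]
        exact Pzero haddl _
    · rw [if_neg hk]
      by_cases hj : j.1 ≤ k'.1
      · rw [if_pos hj, hleib, hb_mo, hleib, Pneg1pow haddl hleib]
        have hc : P (Ct ⟨0, by have := j.2; omega⟩ k') (b k) = 0 := by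
          rw [hskew, hbct, if_neg (by rintro ⟨-, h⟩; exact hk h), neg_zero]
        rw [hc]
        ring
      · rw [if_neg hj]
        exact Pzero haddl _
  -- bracket of λ_j with b k
  have hPbL : ∀ k : Fin n, P (b k) (lamVar t Ct C1 j)
      = -((-1 : A) ^ (n - j.1) * t * (minA C1 j)⁻¹) *
          (if j.1 ≤ k.1 then (-1 : A) ^ (k.1 - j.1) * minOmit Ct j k else 0) := by
    intro k
    have hY : P ((minA C1 j)⁻¹) (b k) = 0 :=
      Pinv0 haddl hleib (PminorDet0 haddl hleib C1 _ _ _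
        (fun a c => by rw [hskew, hbc1, neg_zero]))
    rw [hskew]
    simp only [lamVar, div_eq_mul_inv]
    rw [hleib, hleib, hleib, ht, Pneg1pow haddl hleib, hminACt_b k, hY]
    ring
  -- λ_j Poisson-commutes with everything built from Ct, C1, t
  have hlam_good : ∀ z : A, (∀ a c : Fin n, P (Ct a c) z = 0) →
      (∀ a c : Fin n, P (C1 a c) z = 0) → P (lamVar t Ct C1 j) z = 0 := by
    intro z h1 h2
    simp only [lamVar, div_eq_mul_inv]
    exact Pmul0 hleib (Pmul0 hleib (Pneg1pow haddl hleib _ _) (ht z))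
      (Pmul0 hleib (PminorDet0 haddl hleib Ct _ _ z h1)
        (Pinv0 haddl hleib (PminorDet0 haddl hleib C1 _ _ z h2)))
  -- the coefficient in μ_i Poisson-commutes with λ_j
  have hE1g : ∀ z : A, (∀ a c : Fin n, P z (Ct a c) = 0) → (∀ a c : Fin n, P z (C1 a c) = 0) →
      P (lamVar t Ct C1 j) z = 0 := fun z h1 h2 =>
    hlam_good z (fun a c => by rw [hskew, h1, neg_zero])
      (fun a c => by rw [hskew, h2, neg_zero])
  have hE1L : P ((-1 : A) ^ (n - 1 - i.1) * t⁻¹ * (minA C1 i / minC Ct i))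
      (lamVar t Ct C1 j) = 0 := by
    rw [hskew, hE1g _ ?_ ?_, neg_zero]
    · intro a c
      exact Pmul0 hleib (Pmul0 hleib (Pneg1pow haddl hleib _ _) (Pinv0 haddl hleib (ht _)))
        (Pdiv0 haddl hleib
          (PminorDet0 haddl hleib C1 _ _ _ (fun a' c' => by rw [hskew, hctc1, neg_zero]))
          (PminorDet0 haddl hleib Ct _ _ _ (fun a' c' => hctct a' c' a c)))
    · intro a c
      exact Pmul0 hleib (Pmul0 hleib (Pneg1pow haddl hleib _ _) (Pinv0 haddl hleib (ht _)))
        (Pdiv0 haddl hleib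
          (PminorDet0 haddl hleib C1 _ _ _ (fun a' c' => hc1c1 a' c' a c))
          (PminorDet0 haddl hleib Ct _ _ _ (fun a' c' => hctc1 a' c' a c)))
  have hBDL : ∀ k : Fin n, P (minB Ct i k / minD Ct i) (lamVar t Ct C1 j) = 0 := by
    intro k
    rw [hskew, hE1g _ ?_ ?_, neg_zero]
    · intro a c
      exact Pdiv0 haddl hleib
        (PminorDet0 haddl hleib Ct _ _ _ (fun a' c' => hctct a' c' a c))
        (PminorDet0 haddl hleib Ct _ _ _ (fun a' c' => hctct a' c' a c))
    · intro a c
      exact Pdiv0 haddl hleib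
        (PminorDet0 haddl hleib Ct _ _ _ (fun a' c' => hctc1 a' c' a c))
        (PminorDet0 haddl hleib Ct _ _ _ (fun a' c' => hctc1 a' c' a c))
  -- main closed form
  have hsum' : ∑ k : Fin n, (if k.1 ≤ i.1 then
        (minB Ct i k / minD Ct i) *
          (-((-1 : A) ^ (n - j.1) * t * (minA C1 j)⁻¹) *
            (if j.1 ≤ k.1 then (-1 : A) ^ (k.1 - j.1) * minOmit Ct j k else 0))
      else 0)
      = -((-1 : A) ^ (n - j.1) * t * (minA C1 j)⁻¹) * ((minD Ct i)⁻¹ * Tsum Ct i j) := by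
    rw [Tsum, Finset.mul_sum, Finset.mul_sum]
    refine Finset.sum_congr rfl fun k _ => ?_
    split_ifs <;> first | ring1 | (exfalso; omega)
  have hmain : P (muVar t b Ct C1 i) (lamVar t Ct C1 j)
      = ((-1 : A) ^ (n - 1 - i.1) * t⁻¹ * (minA C1 i / minC Ct i)) *
          (-((-1 : A) ^ (n - j.1) * t * (minA C1 j)⁻¹) *
            ((minD Ct i)⁻¹ * Tsum Ct i j)) := by
    simp only [muVar]
    rw [hleib, hE1L, mul_zero, add_zero, Psum haddl]
    have hterm : ∀ k ∈ (Finset.univ : Finset (Fin n)),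
        P (if k.1 ≤ i.1 then (minB Ct i k / minD Ct i) * b k else 0) (lamVar t Ct C1 j)
        = if k.1 ≤ i.1 then
            (minB Ct i k / minD Ct i) *
              (-((-1 : A) ^ (n - j.1) * t * (minA C1 j)⁻¹) *
                (if j.1 ≤ k.1 then (-1 : A) ^ (k.1 - j.1) * minOmit Ct j k else 0))
          else 0 := by
      intro k _
      by_cases hk : k.1 ≤ i.1
      · rw [if_pos hk, if_pos hk, hleib, hPbL k, hBDL k, mul_zero, add_zero]
      · rw [if_neg hk, if_neg hk]
        exact Pzero haddl _
    rw [Finset.sum_congr rfl hterm, hsum']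
  -- value of the bracket
  have hPval : P (muVar t b Ct C1 i) (lamVar t Ct C1 j) = if i = j then 1 else 0 := by
    rw [hmain, Tsum_eq]
    rcases eq_or_ne i j with heq | hne
    · subst heq
      rw [if_pos rfl, if_pos rfl]
      have hsgn : (-1 : A) ^ (n - 1 - i.1) * (-1 : A) ^ (n - i.1) = -1 := by
        rw [← pow_add, show n - 1 - i.1 + (n - i.1) = 2 * (n - 1 - i.1) + 1 from
          by have := i.2; omega]
        exact Odd.neg_one_pow ⟨n - 1 - i.1, by omega⟩
      have hsimp : ((-1 : A) ^ (n - 1 - i.1) * t⁻¹ * (minA C1 i / minC Ct i)) *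
            (-((-1 : A) ^ (n - i.1) * t * (minA C1 i)⁻¹) *
              ((minD Ct i)⁻¹ * (minD Ct i * minC Ct i)))
          = -((-1 : A) ^ (n - 1 - i.1) * (-1 : A) ^ (n - i.1)) *
              ((t⁻¹ * t) * ((minA C1 i * (minA C1 i)⁻¹) *
                (((minC Ct i)⁻¹ * minC Ct i) * ((minD Ct i)⁻¹ * minD Ct i)))) := by
        rw [div_eq_mul_inv]
        ring
      rw [hsimp, hsgn, inv_mul_cancel₀ ht0, mul_inv_cancel₀ hA1i, inv_mul_cancel₀ hCi,
        inv_mul_cancel₀ hDi]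
      norm_num
    · rw [if_neg hne, if_neg hne]; ring
  -- value of the displayed double sum
  have hinner : ∀ k : Fin n,
      (∑ l : Fin n, (if j.1 ≤ l.1 then
        (-1 : A) ^ (l.1 - j.1) * (minOmit Ct j l / minA C1 j) * (if k = l then 1 else 0)
      else 0))
      = if j.1 ≤ k.1 then (-1 : A) ^ (k.1 - j.1) * (minOmit Ct j k / minA C1 j) else 0 := by
    intro k
    have hre : ∀ l : Fin n, (if j.1 ≤ l.1 then
        (-1 : A) ^ (l.1 - j.1) * (minOmit Ct j l / minA C1 j) * (if k = l then 1 else 0)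
      else 0) = if l = k then
        (if j.1 ≤ k.1 then (-1 : A) ^ (k.1 - j.1) * (minOmit Ct j k / minA C1 j) else 0)
      else 0 := by
      intro l
      by_cases hlk : l = k
      · rw [hlk]
        split_ifs <;> ring
      · rw [if_neg hlk]
        by_cases hj : j.1 ≤ l.1
        · rw [if_pos hj, if_neg (fun h => hlk h.symm), mul_zero]
        · rw [if_neg hj]
    rw [Finset.sum_congr rfl (fun l _ => hre l),
      Finset.sum_ite_eq' Finset.univ k, if_pos (Finset.mem_univ k)]
  have hRHS : (minA C1 i / minC Ct i) *
      (∑ k : Fin n, (if k.1 ≤ i.1 then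
        (minB Ct i k / minD Ct i) *
          ∑ l : Fin n, (if j.1 ≤ l.1 then
            (-1 : A) ^ (l.1 - j.1) * (minOmit Ct j l / minA C1 j) *
              (if k = l then 1 else 0)
          else 0)
      else 0)) = if i = j then 1 else 0 := by
    have h2 : ∑ k : Fin n, (if k.1 ≤ i.1 then
        (minB Ct i k / minD Ct i) *
          ∑ l : Fin n, (if j.1 ≤ l.1 then
            (-1 : A) ^ (l.1 - j.1) * (minOmit Ct j l / minA C1 j) *
              (if k = l then 1 else 0)
          else 0)
      else 0) = (minD Ct i)⁻¹ * (minA C1 j)⁻¹ * Tsum Ct i j := by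
      rw [Tsum, Finset.mul_sum]
      refine Finset.sum_congr rfl fun k _ => ?_
      rw [hinner k]
      split_ifs <;> first | ring1 | (exfalso; omega)
    rw [h2, Tsum_eq]
    rcases eq_or_ne i j with heq | hne
    · subst heq
      rw [if_pos rfl, if_pos rfl, div_eq_mul_inv]
      have hsimp : minA C1 i * (minC Ct i)⁻¹ *
            ((minD Ct i)⁻¹ * (minA C1 i)⁻¹ * (minD Ct i * minC Ct i))
          = (minA C1 i * (minA C1 i)⁻¹) *
              (((minC Ct i)⁻¹ * minC Ct i) * ((minD Ct i)⁻¹ * minD Ct i)) := by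
        ring
      rw [hsimp, mul_inv_cancel₀ hA1i, inv_mul_cancel₀ hCi, inv_mul_cancel₀ hDi]
      norm_num
    · rw [if_neg hne, if_neg hne]; ring
  exact ⟨hPval.trans hRHS.symm, hPval⟩

/-- in the Poisson algebra generated by `b^{(t)}_{k,1}` and the
entries of `C_t`, `C_1` (with `{b^{(t)}_{k,1}, c^{(t)}_{1,k}} = -1` the only
nonvanishing brackets and `t ≠ 0` central, all minors in denominators nonzero),
the bracket `{μ_i, λ_j}` equals
`(Δ^{0,i+1,…}_{i,…}(C₁)/Δ^{i+1,…}_{i+1,…}(C_t)) ∑_{k≤i}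
  (Δ^{i,…}_{k,i+1,…}(C_t)/Δ^{i,…}_{i,…}(C_t)) ∑_{l≥j} (-1)^{l-j}
  (Δ^{j+1,…}_{j,…,l̂,…}(C_t)/Δ^{0,j+1,…}_{j,…}(C₁)) δ_{k,l}`,
and this expression equals `δ_{i,j}`; in particular `{μ_i, λ_j} = δ_{i,j}`. -/
theorem stmt_14 (n : ℕ) (A : Type*) [Field A] (P : A → A → A)
    (haddl : ∀ x y z : A, P (x + y) z = P x z + P y z)
    (hleib : ∀ x y z : A, P (x * y) z = x * P y z + y * P x z)
    (hskew : ∀ x y : A, P x y = -P y x)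
    (t : A) (ht : ∀ x, P t x = 0) (ht0 : t ≠ 0)
    (b : Fin n → A) (Ct C1 : Matrix (Fin n) (Fin n) A)
    (hbct : ∀ k l m : Fin n, P (b k) (Ct l m) = if l.1 = 0 ∧ m = k then -1 else 0)
    (hbc1 : ∀ k l m : Fin n, P (b k) (C1 l m) = 0)
    (hbb : ∀ k k' : Fin n, P (b k) (b k') = 0)
    (hctct : ∀ l m l' m' : Fin n, P (Ct l m) (Ct l' m') = 0)
    (hctc1 : ∀ l m l' m' : Fin n, P (Ct l m) (C1 l' m') = 0)
    (hc1c1 : ∀ l m l' m' : Fin n, P (C1 l m) (C1 l' m') = 0)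
    (hden : ∀ i : Fin n, minA C1 i ≠ 0 ∧ minC Ct i ≠ 0 ∧ minD Ct i ≠ 0) :
    ∀ i j : Fin n,
      P (muVar t b Ct C1 i) (lamVar t Ct C1 j)
        = (minA C1 i / minC Ct i) *
            ∑ k : Fin n, (if k.1 ≤ i.1 then
              (minB Ct i k / minD Ct i) *
                ∑ l : Fin n, (if j.1 ≤ l.1 then
                  (-1 : A) ^ (l.1 - j.1) * (minOmit Ct j l / minA C1 j) *
                    (if k = l then 1 else 0)
                else 0)
            else 0) ∧
      P (muVar t b Ct C1 i) (lamVar t Ct C1 j) = if i = j then 1 else 0 :=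
  stmt_14_aux n A P haddl hleib hskew t ht ht0 b Ct C1 hbct hbc1 hbb hctct hctc1 hc1c1 hden
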